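/- Digraph acyclicity is not expressible in guarded monotone SNP: for every GMSNP sentence Φ over the signature {<} that is true on all finite directed paths, there exists a finite directed cycle that also satisfies Φ. -/

import Mathlib

structure Sig : Type 1 where
  symb : Type
  ar : symb → ℕ

structure Str (σ : Sig) : Type 1 where
  dom : Type
  rel : ∀ s : σ.symb, Set ((Fin (σ.ar s)) → dom)

def IsHom {σ : Sig} (A B : Str σ) (h : A.dom → B.dom) : Prop :=
  ∀ s t, t ∈ A.rel s → (h ∘ t) ∈ B.rel s

def HomTo {σ : Sig} (A B : Str σ) : Prop := ∃ h, IsHom A B h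

def IsEmb {σ : Sig} (A B : Str σ) (h : A.dom → B.dom) : Prop :=
  Function.Injective h ∧ ∀ s t, t ∈ A.rel s ↔ (h ∘ t) ∈ B.rel s

def EmbTo {σ : Sig} (A B : Str σ) : Prop := ∃ h, IsEmb A B h

def IsoTo {σ : Sig} (A B : Str σ) : Prop := ∃ h, IsEmb A B h ∧ Function.Surjective h

def disjUnion {σ : Sig} (A B : Str σ) : Str σ where
  dom := A.dom ⊕ B.dom
  rel := fun s => {t | (∃ u ∈ A.rel s, t = Sum.inl ∘ u) ∨ (∃ u ∈ B.rel s, t = Sum.inr ∘ u)}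

def Sig.sum (τ ρ : Sig) : Sig := ⟨τ.symb ⊕ ρ.symb, Sum.elim τ.ar ρ.ar⟩

def expand {τ ρ : Sig} (A : Str τ) (I : ∀ s : ρ.symb, Set ((Fin (ρ.ar s)) → A.dom)) :
    Str (Sig.sum τ ρ) where
  dom := A.dom
  rel := fun s => match s with
    | Sum.inl s => A.rel s
    | Sum.inr s => I s

structure Atom (σ : Sig) (n : ℕ) where
  sym : σ.symb
  args : Fin (σ.ar sym) → Fin n

structure Lit (σ : Sig) (n : ℕ) where
  atom : Atom σ n
  pos : Bool

abbrev Clause (σ : Sig) (n : ℕ) := List (Lit σ n)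

abbrev CNF (σ : Sig) (n : ℕ) := List (Clause σ n)

def Atom.eval {σ : Sig} {n : ℕ} (a : Atom σ n) (A : Str σ) (v : Fin n → A.dom) : Prop :=
  (fun i => v (a.args i)) ∈ A.rel a.sym

def Lit.eval {σ : Sig} {n : ℕ} (l : Lit σ n) (A : Str σ) (v : Fin n → A.dom) : Prop :=
  if l.pos then l.atom.eval A v else ¬ l.atom.eval A v

def Clause.sat {σ : Sig} {n : ℕ} (c : Clause σ n) (A : Str σ) (v : Fin n → A.dom) : Prop :=
  ∃ l ∈ c, l.eval A v

def CNF.models {σ : Sig} {n : ℕ} (φ : CNF σ n) (A : Str σ) : Prop :=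
  ∀ (v : Fin n → A.dom), ∀ c ∈ φ, c.sat A v

def Lit.vars {σ : Sig} {n : ℕ} (l : Lit σ n) : Set (Fin n) := Set.range l.atom.args

def Clause.vars {σ : Sig} {n : ℕ} (c : Clause σ n) : Set (Fin n) :=
  {x | ∃ l ∈ c, x ∈ l.vars}

def Clause.Connected {σ : Sig} {n : ℕ} (c : Clause σ n) : Prop :=
  ∀ X₁ X₂ : Set (Fin n), X₁ ∪ X₂ = c.vars → Disjoint X₁ X₂ →
    X₁.Nonempty → X₂.Nonempty →
    ∃ l ∈ c, l.pos = false ∧ (∃ x ∈ l.vars, x ∈ X₁) ∧ (∃ x ∈ l.vars, x ∈ X₂)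

abbrev DSig : Sig := ⟨Unit, fun _ => 2⟩

def pathG (N : ℕ) : Str DSig where
  dom := Fin (N + 1)
  rel := fun _ => {t | (t 0).val + 1 = (t 1).val}

def cycleG (m : ℕ) : Str DSig where
  dom := Fin (m + 1)
  rel := fun _ => {t | t 1 = t 0 + 1}

def subm (M c d : ℕ) : ℕ := if d ≤ c then c - d else c + M - d
def wvf (p g M c : ℕ) : ℕ := p + c + (if c < g then M else 0)
def lf (p M d c : ℕ) : ℕ := p + d + subm M c d

lemma coord_trichot {M A W g p d c : ℕ} (hd : d < M) (hcM : c < M)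
    (hsub : subm M c d < A) (hgW : g + A + 2 ≤ W) (hWM : W + A + 2 ≤ M) :
    (wvf p g M c = lf p M d c) ∨
    (wvf p g M c = lf p M d c + M ∧ p ≤ lf p M d c ∧ lf p M d c < p + W) ∨
    (lf p M d c = wvf p g M c + M ∧ p + M ≤ lf p M d c ∧ lf p M d c < p + M + W) := by
  unfold wvf lf subm at *
  split_ifs at * <;> omega

lemma pair_const {M A g p d c1 c2 : ℕ} (hd : d < M) (h1 : c1 < M) (h2 : c2 < M)
    (hs1 : subm M c1 d < A) (hs2 : subm M c2 d < A)
    (hu1 : ¬ subm M g c1 < A) (hu2 : ¬ subm M g c2 < A) (hg : g < M)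
    (hM : A + A + 2 ≤ M) :
    wvf p g M c1 + lf p M d c2 = wvf p g M c2 + lf p M d c1 := by
  unfold wvf lf subm at *
  split_ifs at * <;> omega

lemma tuple_lift {M A g W p d : ℕ} (hd : d < M) (hg : g < M)
    (hgW : g + A + 2 ≤ W) (hWM : W + A + 2 ≤ M) {r : ℕ} (c : Fin r → ℕ)
    (hc : ∀ k, c k < M) (hsub : ∀ k, subm M (c k) d < A)
    (hunc : ∀ k, ¬ subm M g (c k) < A) :
    (∀ k, wvf p g M (c k) = lf p M d (c k)) ∨
    (∀ k, wvf p g M (c k) = lf p M d (c k) + M ∧ p ≤ lf p M d (c k) ∧ lf p M d (c k) < p + W) ∨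
    (∀ k, lf p M d (c k) = wvf p g M (c k) + M ∧ p + M ≤ lf p M d (c k) ∧ lf p M d (c k) < p + M + W) := by
  have hAM : A + A + 2 ≤ M := by omega
  cases r with
  | zero => exact Or.inl (fun k => k.elim0)
  | succ r' =>
    rcases coord_trichot (p := p) (g := g) hd (hc 0) (hsub 0) hgW hWM with h0 | h0 | h0
    · refine Or.inl (fun k => ?_)
      rcases coord_trichot (p := p) (g := g) hd (hc k) (hsub k) hgW hWM with h | h | h
      · exact h
      · have := pair_const (p := p) hd (hc 0) (hc k) (hsub 0) (hsub k) (hunc 0) (hunc k) hg hAM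
        omega
      · have := pair_const (p := p) hd (hc 0) (hc k) (hsub 0) (hsub k) (hunc 0) (hunc k) hg hAM
        omega
    · refine Or.inr (Or.inl (fun k => ?_))
      rcases coord_trichot (p := p) (g := g) hd (hc k) (hsub k) hgW hWM with h | h | h
      · have := pair_const (p := p) hd (hc 0) (hc k) (hsub 0) (hsub k) (hunc 0) (hunc k) hg hAM
        omega
      · exact h
      · have := pair_const (p := p) hd (hc 0) (hc k) (hsub 0) (hsub k) (hunc 0) (hunc k) hg hAM
        omega
    · refine Or.inr (Or.inr (fun k => ?_))
      rcases coord_trichot (p := p) (g := g) hd (hc k) (hsub k) hgW hWM with h | h | h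
      · have := pair_const (p := p) hd (hc 0) (hc k) (hsub 0) (hsub k) (hunc 0) (hunc k) hg hAM
        omega
      · have := pair_const (p := p) hd (hc 0) (hc k) (hsub 0) (hsub k) (hunc 0) (hunc k) hg hAM
        omega
      · exact h

lemma subm_inj {M g g' c : ℕ} (hg : g < M) (hg' : g' < M) (hc : c < M)
    (h : subm M g c = subm M g' c) : g = g' := by
  unfold subm at h
  split_ifs at h <;> omega

lemma exists_gap (M A n' : ℕ) (hM : A * n' + 1 ≤ M) (f : Fin n' → ℕ)
    (hfb : ∀ x, f x < M) :
    ∃ g, g ≤ A * n' ∧ g < M ∧ ∀ x, ¬ subm M g (f x) < A := by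
  classical
  by_contra hcon
  push_neg at hcon
  have hmap : ∀ g : Fin (A * n' + 1), ∃ x : Fin n', subm M g.val (f x) < A := by
    intro g
    exact hcon g.val (by omega) (by have := g.isLt; omega)
  choose F hF using hmap
  have hcard : Fintype.card (Fin n' × Fin A) < Fintype.card (Fin (A * n' + 1)) := by
    simp [Fintype.card_prod]
    have : n' * A = A * n' := Nat.mul_comm _ _
    omega
  obtain ⟨x, y, hxy, hexy⟩ := Fintype.exists_ne_map_eq_of_card_lt
    (fun g : Fin (A * n' + 1) => ((F g, ⟨subm M g.val (f (F g)), hF g⟩) : Fin n' × Fin A)) hcard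
  apply hxy
  have h1 : F x = F y := congrArg Prod.fst hexy
  have h2 : subm M x.val (f (F x)) = subm M y.val (f (F y)) := by
    have := congrArg Prod.snd hexy
    simpa using this
  rw [h1] at h2
  have : x.val = y.val := subm_inj (by have := x.isLt; omega) (by have := y.isLt; omega) (hfb _) h2
  exact Fin.ext this
theorem stmt13 (ρ : Sig) (n : ℕ) (φ : CNF (Sig.sum DSig ρ) n)
    (hheads : ∀ c ∈ φ, ∀ l ∈ c, l.pos = true → l.atom.sym.isRight)
    (hguard : ∀ c ∈ φ, ∀ l ∈ c, l.pos = true →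
       ∃ l' ∈ c, l'.pos = false ∧ Lit.vars l ⊆ Lit.vars l')
    (hpaths : ∀ N : ℕ, ∃ I, CNF.models φ (expand (pathG N) I)) :
    ∃ m : ℕ, ∃ I, CNF.models φ (expand (cycleG m) I) := by
  classical
  obtain ⟨A, hA⟩ : ∃ A, A = 2*n+2 := ⟨_, rfl⟩
  obtain ⟨W, hW⟩ : ∃ W, W = A*n + A + 2 := ⟨_, rfl⟩
  obtain ⟨R, hR⟩ : ∃ R, R = W + A + 5 := ⟨_, rfl⟩
  set AL : List (Atom (Sig.sum DSig ρ) n) := φ.flatMap (fun cl => cl.map Lit.atom) with hAL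
  haveI : Fintype (∀ i : Fin AL.length,
      Set (Fin ((Sig.sum DSig ρ).ar (AL.get i).sym) → Fin W)) :=
    Fintype.ofFinite _
  obtain ⟨TC, hTC⟩ : ∃ TC, TC = Fintype.card (∀ i : Fin AL.length,
      Set (Fin ((Sig.sum DSig ρ).ar (AL.get i).sym) → Fin W)) := ⟨_, rfl⟩
  obtain ⟨N, hN⟩ : ∃ N, N = 3*((TC+1)*R) + W + 5 := ⟨_, rfl⟩
  obtain ⟨I, hI⟩ := hpaths N
  obtain ⟨pin, hpin⟩ : ∃ pin : ℕ → Fin (N+1), ∀ y, (pin y).val = min y N :=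
    ⟨fun y => ⟨min y N, by omega⟩, fun y => rfl⟩
  obtain ⟨x0, y0, hxy0, hFxy⟩ := Fintype.exists_ne_map_eq_of_card_lt
    (fun (t : Fin (TC+1)) => (fun (i : Fin AL.length) =>
      ({u | (fun k => pin (t.val * R + (u k).val)) ∈ (expand (pathG N) I).rel (AL.get i).sym}
        : Set (Fin ((Sig.sum DSig ρ).ar (AL.get i).sym) → Fin W))))
    (by rw [Fintype.card_fin, ← hTC]; omega)
  obtain ⟨aa, bb, habv, hFab⟩ : ∃ aa bb : Fin (TC+1), aa.val < bb.val ∧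
      (fun (i : Fin AL.length) =>
      ({u | (fun k => pin (aa.val * R + (u k).val)) ∈ (expand (pathG N) I).rel (AL.get i).sym}
        : Set (Fin ((Sig.sum DSig ρ).ar (AL.get i).sym) → Fin W))) =
      (fun (i : Fin AL.length) =>
      ({u | (fun k => pin (bb.val * R + (u k).val)) ∈ (expand (pathG N) I).rel (AL.get i).sym}
        : Set (Fin ((Sig.sum DSig ρ).ar (AL.get i).sym) → Fin W))) := by
    rcases Ne.lt_or_gt hxy0 with h | h
    · exact ⟨x0, y0, Fin.lt_def.mp h, hFxy⟩
    · exact ⟨y0, x0, Fin.lt_def.mp h, hFxy.symm⟩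
  obtain ⟨p, hp⟩ : ∃ p, p = aa.val * R := ⟨_, rfl⟩
  have hmul1 : (aa.val + 1) * R ≤ bb.val * R := Nat.mul_le_mul_right R habv
  have hmul2 : bb.val * R ≤ TC * R := Nat.mul_le_mul_right R (by have := bb.isLt; omega)
  have hadd : (aa.val + 1) * R = aa.val * R + R := by ring
  have haddT : (TC + 1) * R = TC * R + R := by ring
  obtain ⟨m, hm⟩ : ∃ m, bb.val * R = p + (m+1) := ⟨bb.val * R - p - 1, by omega⟩
  have hA2 : 2 ≤ A := by omega
  have hm1 : 1 ≤ m := by omega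
  have hMR : R ≤ m + 1 := by omega
  have hWM : W + A + 2 ≤ m + 1 := by omega
  have hAn : A * n + 1 ≤ m + 1 := by omega
  have hNb : p + (m+1) + (m+1) + W + 2 ≤ N := by omega
  obtain ⟨I', hI'⟩ : ∃ I' : (∀ s : ρ.symb, Set (Fin (ρ.ar s) → Fin (m+1))),
      ∀ (s : ρ.symb) (t : Fin (ρ.ar s) → Fin (m+1)),
        t ∈ I' s ↔ ∃ d, d < m + 1 ∧ (∀ k, subm (m+1) (t k).val d < A) ∧
          ((fun k => pin (lf p (m+1) d (t k).val)) ∈ I s) :=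
    ⟨fun s => {t | ∃ d, d < m + 1 ∧ (∀ k, subm (m+1) (t k).val d < A) ∧
          ((fun k => pin (lf p (m+1) d (t k).val)) ∈ I s)}, fun s t => Iff.rfl⟩
  refine ⟨m, I', ?_⟩
  intro v c hc
  by_contra hnosat
  have hnolit : ∀ l ∈ c, ¬ l.eval (expand (cycleG m) I') v := fun l hl hev => hnosat ⟨l, hl, hev⟩
  obtain ⟨g, hgb, hgM, hgunc⟩ := exists_gap (m+1) A n hAn (fun x => (v x).val) (fun x => (v x).isLt)
  have hgW : g + A + 2 ≤ W := by omega
  obtain ⟨lit, hlit, hlev⟩ := hI (fun x => pin (wvf p g (m+1) (v x).val)) c hc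
  -- transfer between matched windows
  have hCtoP : ∀ (s : (Sig.sum DSig ρ).symb) (tup : Fin ((Sig.sum DSig ρ).ar s) → Fin (m+1)),
      tup ∈ (expand (cycleG m) I').rel s →
      ∃ d, d < m + 1 ∧ (∀ k, subm (m+1) (tup k).val d < A) ∧
        ((fun k => pin (lf p (m+1) d (tup k).val)) ∈ (expand (pathG N) I).rel s) := by
    rintro (s | s)
    · show ∀ tup : Fin 2 → Fin (m+1), tup ∈ (expand (cycleG m) I').rel (Sum.inl s) →
        ∃ d, d < m + 1 ∧ (∀ k : Fin 2, subm (m+1) (tup k).val d < A) ∧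
        ((fun k : Fin 2 => pin (lf p (m+1) d (tup k).val)) ∈ (expand (pathG N) I).rel (Sum.inl s))
      intro tup htup
      have h10 : tup 1 = tup 0 + 1 := htup
      have h0 := (tup 0).isLt
      have h1 := (tup 1).isLt
      have hv1 : (tup 1).val = (tup 0).val + 1 ∨ ((tup 0).val = m ∧ (tup 1).val = 0) := by
        rcases eq_or_ne (tup 0) (Fin.last m) with he | he
        · right
          refine ⟨by rw [he]; exact Fin.val_last m, ?_⟩
          rw [h10, Fin.val_add_one, if_pos he]
        · left
          rw [h10, Fin.val_add_one, if_neg he]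
      have hsub1 : subm (m+1) (tup 1).val (tup 0).val = 1 := by
        rcases hv1 with h | h <;> (unfold subm; split_ifs <;> omega)
      refine ⟨(tup 0).val, (tup 0).isLt, ?_, ?_⟩
      · intro k
        have hk : k.val = 0 ∨ k.val = 1 := by have := k.isLt; omega
        rcases hk with hk | hk
        · have hke : k = 0 := Fin.ext hk
          have h00 : subm (m+1) (tup 0).val (tup 0).val = 0 := by unfold subm; simp
          rw [hke, h00]; omega
        · have hke : k = 1 := Fin.ext hk
          rw [hke, hsub1]; omega
      · have e0 : lf p (m+1) (tup 0).val (tup 0).val = p + (tup 0).val := by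
          unfold lf subm; simp
        have e1 : lf p (m+1) (tup 0).val (tup 1).val = p + (tup 0).val + 1 := by
          unfold lf; rw [hsub1]
        show (pin (lf p (m+1) (tup 0).val (tup 0).val)).val + 1
            = (pin (lf p (m+1) (tup 0).val (tup 1).val)).val
        rw [e0, e1, hpin, hpin]
        have hx : p + (tup 0).val ≤ N := by omega
        have hy : p + (tup 0).val + 1 ≤ N := by omega
        rw [Nat.min_eq_left hx, Nat.min_eq_left hy]
    · intro tup htup
      have htup' : tup ∈ I' s := htup
      replace htup' := (hI' s tup).mp htup'
      obtain ⟨d, hd, hsubs, hmem⟩ := htup'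
      exact ⟨d, hd, hsubs, hmem⟩
  have hPtoC : ∀ (s : (Sig.sum DSig ρ).symb) (tup : Fin ((Sig.sum DSig ρ).ar s) → Fin (m+1))
      (d : ℕ), d < m + 1 → (∀ k, subm (m+1) (tup k).val d < A) →
      ((fun k => pin (lf p (m+1) d (tup k).val)) ∈ (expand (pathG N) I).rel s) →
      tup ∈ (expand (cycleG m) I').rel s := by
    rintro (s | s)
    · show ∀ (tup : Fin 2 → Fin (m+1)) (d : ℕ), d < m + 1 →
        (∀ k : Fin 2, subm (m+1) (tup k).val d < A) →
        ((fun k : Fin 2 => pin (lf p (m+1) d (tup k).val)) ∈ (expand (pathG N) I).rel (Sum.inl s)) →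
        tup ∈ (expand (cycleG m) I').rel (Sum.inl s)
      intro tup d hd hsubs hmem
      have hmem' : (pin (lf p (m+1) d (tup 0).val)).val + 1
          = (pin (lf p (m+1) d (tup 1).val)).val := hmem
      have h0 := (tup 0).isLt
      have h1 := (tup 1).isLt
      have hb0 : lf p (m+1) d (tup 0).val ≤ N := by
        unfold lf subm; split_ifs <;> omega
      have hb1 : lf p (m+1) d (tup 1).val ≤ N := by
        unfold lf subm; split_ifs <;> omega
      rw [hpin, hpin, Nat.min_eq_left hb0, Nat.min_eq_left hb1] at hmem'
      have hs0 := hsubs 0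
      have hs1 := hsubs 1
      have hkey : (tup 1).val = (tup 0).val + 1 ∨ ((tup 0).val = m ∧ (tup 1).val = 0) := by
        unfold lf subm at hmem' hs0 hs1
        split_ifs at hmem' hs0 hs1 <;> omega
      show tup 1 = tup 0 + 1
      apply Fin.ext
      rw [Fin.val_add_one]
      split_ifs with hlast
      · have hv0 : (tup 0).val = m := by rw [hlast]; exact Fin.val_last m
        rcases hkey with h | h <;> omega
      · have hne : (tup 0).val ≠ m := by
          intro hh
          exact hlast (Fin.ext (by rw [hh, Fin.val_last]))
        rcases hkey with h | h
        · exact h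
        · exact absurd h.1 hne
    · intro tup d hd hsubs hmem
      have : tup ∈ I' s := (hI' s tup).mpr ⟨d, hd, hsubs, hmem⟩
      exact this
  have hmemAL : lit.atom ∈ AL := by
    rw [hAL]
    exact List.mem_flatMap.mpr ⟨c, hc, List.mem_map.mpr ⟨lit, hlit, rfl⟩⟩
  obtain ⟨iAL, hiAL⟩ := List.mem_iff_get.mp hmemAL
  have htransA : ∀ (u : Fin ((Sig.sum DSig ρ).ar (AL.get iAL).sym) → ℕ),
      (∀ k, p ≤ u k ∧ u k < p + W) →
      (((fun k => pin (u k)) ∈ (expand (pathG N) I).rel (AL.get iAL).sym) ↔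
       ((fun k => pin (u k + (m+1))) ∈ (expand (pathG N) I).rel (AL.get iAL).sym)) := by
    intro u hu
    have hseteq := congrFun hFab iAL
    have hub : ∀ k, u k - p < W := fun k => by have h1 := (hu k).1; have h2 := (hu k).2; omega
    have h1 : (fun k => (⟨u k - p, hub k⟩ : Fin W)) ∈
        {u_1 : Fin ((Sig.sum DSig ρ).ar (AL.get iAL).sym) → Fin W |
          (fun k => pin (aa.val * R + (u_1 k).val)) ∈ (expand (pathG N) I).rel (AL.get iAL).sym} ↔
        (fun k => (⟨u k - p, hub k⟩ : Fin W)) ∈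
        {u_1 : Fin ((Sig.sum DSig ρ).ar (AL.get iAL).sym) → Fin W |
          (fun k => pin (bb.val * R + (u_1 k).val)) ∈ (expand (pathG N) I).rel (AL.get iAL).sym} := by
      rw [hseteq]
    simp only [Set.mem_setOf_eq] at h1
    have e1 : (fun k => pin (aa.val * R + ((⟨u k - p, hub k⟩ : Fin W)).val))
        = (fun k => pin (u k)) := by
      funext k
      apply congrArg
      have h := (hu k).1
      show aa.val * R + (u k - p) = u k
      omega
    have e2 : (fun k => pin (bb.val * R + ((⟨u k - p, hub k⟩ : Fin W)).val))
        = (fun k => pin (u k + (m+1))) := by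
      funext k
      apply congrArg
      have h := (hu k).1
      show bb.val * R + (u k - p) = u k + (m+1)
      omega
    rw [e1, e2] at h1
    exact h1
  rw [hiAL] at htransA
  cases hpos : lit.pos with
  | false =>
    have hatC : (fun i => v (lit.atom.args i)) ∈ (expand (cycleG m) I').rel lit.atom.sym := by
      have h := hnolit lit hlit
      rw [Lit.eval, hpos] at h
      simpa [Atom.eval] using h
    have hatP : ¬ ((fun i => pin (wvf p g (m+1) (v (lit.atom.args i)).val))
        ∈ (expand (pathG N) I).rel lit.atom.sym) := by
      unfold Lit.eval at hlev; rw [hpos] at hlev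
      simp [Atom.eval] at hlev; exact hlev
    obtain ⟨d, hd, hsubs, hliftmem⟩ := hCtoP lit.atom.sym _ hatC
    apply hatP
    rcases tuple_lift (p := p) (W := W) hd hgM hgW hWM
        (fun k => (v (lit.atom.args k)).val) (fun k => (v (lit.atom.args k)).isLt) hsubs
        (fun k => hgunc (lit.atom.args k)) with h | h | h
    · have e : (fun i => pin (wvf p g (m+1) (v (lit.atom.args i)).val))
          = (fun i => pin (lf p (m+1) d (v (lit.atom.args i)).val)) :=
        funext fun i => congrArg pin (h i)
      rw [e]; exact hliftmem
    · have H := htransA (fun k => lf p (m+1) d (v (lit.atom.args k)).val)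
        (fun k => ⟨(h k).2.1, (h k).2.2⟩)
      have e : (fun i => pin (wvf p g (m+1) (v (lit.atom.args i)).val))
          = (fun i => pin (lf p (m+1) d (v (lit.atom.args i)).val + (m+1))) :=
        funext fun i => congrArg pin ((h i).1)
      rw [e]
      exact H.mp hliftmem
    · have hwb : ∀ k, p ≤ wvf p g (m+1) (v (lit.atom.args k)).val ∧
          wvf p g (m+1) (v (lit.atom.args k)).val < p + W := by
        intro k
        have hk := h k
        omega
      have H := htransA (fun k => wvf p g (m+1) (v (lit.atom.args k)).val) hwb
      apply H.mpr
      have e : (fun i => pin (wvf p g (m+1) (v (lit.atom.args i)).val + (m+1)))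
          = (fun i => pin (lf p (m+1) d (v (lit.atom.args i)).val)) :=
        funext fun i => congrArg pin ((h i).1).symm
      rw [e]; exact hliftmem
  | true =>
    have hatC : ¬ ((fun i => v (lit.atom.args i)) ∈ (expand (cycleG m) I').rel lit.atom.sym) := by
      have h := hnolit lit hlit
      rw [Lit.eval, hpos] at h
      simpa [Atom.eval] using h
    have hatP : (fun i => pin (wvf p g (m+1) (v (lit.atom.args i)).val))
        ∈ (expand (pathG N) I).rel lit.atom.sym := by
      unfold Lit.eval at hlev; rw [hpos] at hlev
      simp [Atom.eval] at hlev; exact hlev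
    obtain ⟨l', hl'c, hl'neg, hl'vars⟩ := hguard c hc lit hlit hpos
    have hatC' : (fun i => v (l'.atom.args i)) ∈ (expand (cycleG m) I').rel l'.atom.sym := by
      have h := hnolit l' hl'c
      rw [Lit.eval, hl'neg] at h
      simpa [Atom.eval] using h
    obtain ⟨d, hd, hsubs', hmem'⟩ := hCtoP l'.atom.sym _ hatC'
    have hsubs : ∀ k, subm (m+1) (v (lit.atom.args k)).val d < A := by
      intro k
      obtain ⟨k', hk'⟩ := hl'vars ⟨k, rfl⟩
      rw [← hk']
      exact hsubs' k'
    apply hatC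
    apply hPtoC lit.atom.sym _ d hd hsubs
    rcases tuple_lift (p := p) (W := W) hd hgM hgW hWM
        (fun k => (v (lit.atom.args k)).val) (fun k => (v (lit.atom.args k)).isLt) hsubs
        (fun k => hgunc (lit.atom.args k)) with h | h | h
    · have e : (fun k => pin (lf p (m+1) d (v (lit.atom.args k)).val))
          = (fun k => pin (wvf p g (m+1) (v (lit.atom.args k)).val)) :=
        funext fun k => congrArg pin (h k).symm
      rw [e]; exact hatP
    · have H := htransA (fun k => lf p (m+1) d (v (lit.atom.args k)).val)
        (fun k => ⟨(h k).2.1, (h k).2.2⟩)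
      apply H.mpr
      have e : (fun k => pin (lf p (m+1) d (v (lit.atom.args k)).val + (m+1)))
          = (fun k => pin (wvf p g (m+1) (v (lit.atom.args k)).val)) :=
        funext fun k => congrArg pin (h k).1.symm
      rw [e]; exact hatP
    · have hwb : ∀ k, p ≤ wvf p g (m+1) (v (lit.atom.args k)).val ∧
          wvf p g (m+1) (v (lit.atom.args k)).val < p + W := by
        intro k
        have hk := h k
        omega
      have H := htransA (fun k => wvf p g (m+1) (v (lit.atom.args k)).val) hwb
      have e : (fun k => pin (wvf p g (m+1) (v (lit.atom.args k)).val + (m+1)))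
          = (fun k => pin (lf p (m+1) d (v (lit.atom.args k)).val)) :=
        funext fun k => congrArg pin (h k).1.symm
      rw [← e]
      exact H.mp hatP
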